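/- Let N ≥ 2 and let λ̃₁ ≥ λ̃₂ ≥ … ≥ λ̃_N > 0 be positive reals listed in decreasing order that are not all equal (λ̃₁ > λ̃_N). Let η₂ be a real with η₂ < −1/λ̃_N, and set λᵢ = λ̃ᵢ + 1/η₂ for each i (so each λᵢ > 0). Then for every n with 1 ≤ n < N, (Σ_{j=1}^{n} λⱼ)/(Σ_{i=1}^{N} λᵢ) > (Σ_{j=1}^{n} λ̃ⱼ)/(Σ_{i=1}^{N} λ̃ᵢ); that is, the variance explained by the top n deep principal components of the two-level deep kernel PCA strictly exceeds the variance explained by the top n principal components of shallow kernel PCA. -/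

import Mathlib

open Finset

lemma card_filter_lt_aux (N n : ℕ) (h : n ≤ N) :
    (Finset.univ.filter (fun j : Fin N => (j : ℕ) < n)).card = n := by
  have : (Finset.univ.filter (fun j : Fin N => (j : ℕ) < n))
      = Finset.map (Fin.castLEEmb h) Finset.univ := by
    ext j
    simp only [Finset.mem_filter, Finset.mem_univ, true_and, Finset.mem_map,
      Fin.castLEEmb_apply]
    constructor
    · intro hj; exact ⟨⟨j, hj⟩, rfl⟩
    · rintro ⟨i, rfl⟩; exact i.isLt
  rw [this, Finset.card_map, Finset.card_univ, Fintype.card_fin]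

/-- Explained-variance lemma for two-level deep kernel PCA (full decomposition):
if `η₂ < −1/λ̃_N` then for every `1 ≤ n < N` the deep eigenvalues
`λᵢ = λ̃ᵢ + 1/η₂` explain a strictly larger fraction of the variance than the
shallow eigenvalues `λ̃ᵢ`. -/
theorem dkpca_explained_variance_gt_shallow
    (N : ℕ) (hN : 2 ≤ N)
    (lamt : Fin N → ℝ) (hanti : Antitone lamt) (hpos : ∀ i, 0 < lamt i)
    (hne : lamt ⟨N - 1, by omega⟩ < lamt ⟨0, by omega⟩)
    (η₂ : ℝ) (hη₂ : η₂ < -1 / lamt ⟨N - 1, by omega⟩)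
    (lam : Fin N → ℝ) (hlam : ∀ i, lam i = lamt i + 1 / η₂)
    -- (so each λᵢ > 0)
    (hlampos : ∀ i, 0 < lam i)
    (n : ℕ) (hn1 : 1 ≤ n) (hnN : n < N) :
    (∑ j ∈ Finset.univ.filter (fun j : Fin N => (j : ℕ) < n), lamt j) / (∑ i, lamt i)
      < (∑ j ∈ Finset.univ.filter (fun j : Fin N => (j : ℕ) < n), lam j) / (∑ i, lam i) := by
  set A := Finset.univ.filter (fun j : Fin N => (j : ℕ) < n) with hA
  set B := Finset.univ.filter (fun j : Fin N => ¬ (j : ℕ) < n) with hB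
  set c : ℝ := 1 / η₂ with hc
  -- c < 0
  have hlast : 0 < lamt ⟨N - 1, by omega⟩ := hpos _
  have hη₂neg : η₂ < 0 := lt_trans hη₂ (div_neg_of_neg_of_pos (by norm_num) hlast)
  have hcneg : c < 0 := by rw [hc]; exact div_neg_of_pos_of_neg one_pos hη₂neg
  -- cards
  have hcardA : A.card = n := card_filter_lt_aux N n hnN.le
  have hcardB : B.card = N - n := by
    have := Finset.card_filter_add_card_filter_not
      (s := (Finset.univ : Finset (Fin N))) (p := fun j : Fin N => (j : ℕ) < n)
    rw [← hA, ← hB] at this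
    simp only [Finset.card_univ, Fintype.card_fin] at this
    omega
  -- sums
  set S := ∑ j ∈ A, lamt j with hS
  set T := ∑ i, lamt i with hT
  have hTsplit : ∑ j ∈ B, lamt j = T - S := by
    have := Finset.sum_filter_add_sum_filter_not Finset.univ
      (fun j : Fin N => (j : ℕ) < n) lamt
    rw [← hA, ← hB] at this
    rw [← hT] at this
    linarith
  have hTpos : 0 < T := Finset.sum_pos (fun i _ => hpos i) ⟨⟨0, by omega⟩, Finset.mem_univ _⟩
  have hTlam : ∑ i, lam i = T + N * c := by
    simp only [hlam, ← hc, Finset.sum_add_distrib, Finset.sum_const, Finset.card_univ,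
      Fintype.card_fin, nsmul_eq_mul, hT]
  have hSlam : ∑ j ∈ A, lam j = S + n * c := by
    simp only [hlam, ← hc, Finset.sum_add_distrib, Finset.sum_const, hcardA,
      nsmul_eq_mul, hS]
  have hTlampos : 0 < T + N * c := by
    rw [← hTlam]; exact Finset.sum_pos (fun i _ => hlampos i) ⟨⟨0, by omega⟩, Finset.mem_univ _⟩
  -- key: (N - n) * S > n * (T - S)
  have hkey : 0 < ∑ j ∈ A, ∑ i ∈ B, (lamt j - lamt i) := by
    apply Finset.sum_pos'
    · intro j hj
      apply Finset.sum_nonneg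
      intro i hi
      have hj' : (j : ℕ) < n := (Finset.mem_filter.mp hj).2
      have hi' : ¬ (i : ℕ) < n := (Finset.mem_filter.mp hi).2
      have : j ≤ i := by
        rw [Fin.le_def]; omega
      linarith [hanti this]
    · refine ⟨⟨0, by omega⟩, Finset.mem_filter.mpr ⟨Finset.mem_univ _, by simp; omega⟩, ?_⟩
      apply Finset.sum_pos'
      · intro i hi
        have hi' : ¬ (i : ℕ) < n := (Finset.mem_filter.mp hi).2
        have : (⟨0, by omega⟩ : Fin N) ≤ i := by rw [Fin.le_def]; simp
        linarith [hanti this]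
      · refine ⟨⟨N - 1, by omega⟩, Finset.mem_filter.mpr ⟨Finset.mem_univ _, by simp; omega⟩, ?_⟩
        linarith
  have hdouble : ∑ j ∈ A, ∑ i ∈ B, (lamt j - lamt i)
      = (N - n : ℕ) * S - n * (T - S) := by
    simp only [Finset.sum_sub_distrib, Finset.sum_const, nsmul_eq_mul, hcardB,
      hcardA, hTsplit, ← Finset.mul_sum, ← hS]
    ring
  rw [hdouble] at hkey
  have hNn : ((N - n : ℕ) : ℝ) = (N : ℝ) - n := by
    have : n ≤ N := hnN.le
    push_cast [this]; ring
  rw [hNn] at hkey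
  have hmain : (n : ℝ) * T < N * S := by nlinarith
  rw [hTlam, hSlam, div_lt_div_iff₀ hTpos hTlampos]
  nlinarith [mul_lt_mul_of_neg_right hmain hcneg]
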